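/- Let t, s ≥ 1 and let (c_n) be an oscillating sequence of order t·s. Let X be a set, T : X → X any map, x ∈ X, and let f_1, …, f_k : X → ℂ satisfy |f_i| ≡ 1 and Λ^{t+1} f_i ≡ 1 for each i, where (Λf)(x) = f(Tx)·conj(f(x)). Let q_1, …, q_k : ℕ → ℕ be polynomial maps of degree at most s taking nonnegative integer values. Then (1/N) ∑_{n=0}^{N-1} c_n ∏_{i=1}^{k} f_i(T^{q_i(n)} x) → 0 as N → ∞. -/

import Mathlib

open Filter Finset

/-- `c` is an oscillating sequence of order `k`. -/
def OscillatingOfOrder (c : ℕ → ℂ) (k : ℕ) : Prop :=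
  (∃ l : ℝ, 1 ≤ l ∧
      (fun N : ℕ => ∑ n ∈ Finset.Icc 1 N, ‖c n‖ ^ l)
        =O[atTop] (fun N : ℕ => (N : ℝ))) ∧
  ∀ P : Polynomial ℝ, P.natDegree ≤ k →
    Tendsto (fun N : ℕ => (N : ℂ)⁻¹ *
        ∑ n ∈ Finset.Icc 1 N, c n * Complex.exp (2 * Real.pi * Complex.I * (P.eval (n : ℝ))))
      atTop (nhds 0)

/-- The derived homomorphism `(Λ f) x = f (T x) · conj (f x)` on complex valued functions. -/
def derivedHom {X : Type*} (T : X → X) (f : X → ℂ) : X → ℂ :=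
  fun x => f (T x) * (starRingEnd ℂ) (f x)

namespace FanAux

open Polynomial

/-- Discrete antiderivative of a real polynomial, with degree control. -/
lemma exists_discrete_antideriv :
    ∀ d : ℕ, ∀ Q : Polynomial ℝ, Q.natDegree ≤ d →
      ∃ S : Polynomial ℝ, S.natDegree ≤ d + 1 ∧
        ∀ y : ℝ, S.eval (y + 1) = S.eval y + Q.eval y := by
  intro d
  induction d with
  | zero =>
      intro Q hQ
      refine ⟨C (Q.coeff 0) * X, ?_, ?_⟩
      · simpa using natDegree_C_mul_X_pow_le (Q.coeff 0) 1
      · intro y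
        rw [eq_C_of_natDegree_le_zero hQ]
        simp; ring
  | succ d ih =>
      intro Q hQ
      set a : ℝ := Q.coeff (d + 1) / (d + 2) with ha
      set D : Polynomial ℝ := C a * ((X + 1) ^ (d + 2) - X ^ (d + 2)) with hD
      have hDcoeff : ∀ k : ℕ, D.coeff k
          = a * (((d + 2).choose k : ℝ) - (if d + 2 = k then 1 else 0)) := by
        intro k
        simp [hD, coeff_C_mul, coeff_sub, coeff_X_add_one_pow, coeff_X_pow, eq_comm]
      have hR : (Q - D).natDegree ≤ d := by
        apply natDegree_le_iff_coeff_eq_zero.mpr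
        intro N hN
        have h3 : N = d + 1 ∨ N = d + 2 ∨ d + 2 < N := by omega
        rcases h3 with h | h | h
        · subst h
          rw [coeff_sub, hDcoeff]
          have : ((d + 2).choose (d + 1) : ℝ) = (d + 2 : ℝ) := by
            rw [Nat.choose_succ_self_right]; push_cast; ring
          rw [this, if_neg (by omega)]
          have h2 : (d + 2 : ℝ) ≠ 0 := by positivity
          rw [ha, sub_zero, div_mul_cancel₀ _ h2, sub_self]
        · subst h
          have hq0 : Q.coeff (d + 2) = 0 :=
            coeff_eq_zero_of_natDegree_lt (by omega)
          rw [coeff_sub, hDcoeff, hq0, if_pos rfl, Nat.choose_self]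
          push_cast; ring
        · have hq0 : Q.coeff N = 0 := coeff_eq_zero_of_natDegree_lt (by omega)
          rw [coeff_sub, hDcoeff, hq0, Nat.choose_eq_zero_of_lt h, if_neg (by omega)]
          push_cast; ring
      obtain ⟨S₁, hS₁deg, hS₁⟩ := ih (Q - D) hR
      refine ⟨C a * X ^ (d + 2) + S₁, ?_, ?_⟩
      · refine (natDegree_add_le _ _).trans (max_le ?_ (hS₁deg.trans (by omega)))
        exact natDegree_C_mul_X_pow_le a (d + 2)
      · intro y
        have h1 := hS₁ y
        simp only [eval_sub, hD, eval_mul, eval_C, eval_pow, eval_add, eval_X, eval_one] at h1 ⊢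
        linarith [h1]

/-- Multiplicative difference operator on sequences. -/
noncomputable def seqD (g : ℕ → ℂ) : ℕ → ℂ := fun n => g (n + 1) * (starRingEnd ℂ) (g n)

lemma seqD_abs {g : ℕ → ℂ} (hg : ∀ n, ‖g n‖ = 1) (n : ℕ) :
    ‖seqD g n‖ = 1 := by
  simp [seqD, map_mul, hg]

lemma seqD_mul {g : ℕ → ℂ} (hg : ∀ n, ‖g n‖ = 1) (n : ℕ) :
    seqD g n * g n = g (n + 1) := by
  have h : (g n) * (starRingEnd ℂ) (g n) = 1 := by
    rw [Complex.mul_conj, ← Complex.sq_norm, hg n]; norm_num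
  calc seqD g n * g n = g (n + 1) * ((g n) * (starRingEnd ℂ) (g n)) := by rw [seqD]; ring
    _ = g (n + 1) := by rw [h, mul_one]

lemma exp_of_unimodular {z : ℂ} (hz : ‖z‖ = 1) :
    ∃ θ : ℝ, z = Complex.exp (2 * Real.pi * Complex.I * (θ : ℂ)) := by
  have hpi : (Real.pi : ℂ) ≠ 0 := by exact_mod_cast Real.pi_ne_zero
  refine ⟨z.arg / (2 * Real.pi), ?_⟩
  have h := Complex.norm_mul_exp_arg_mul_I z
  rw [hz] at h
  push_cast at h
  rw [one_mul] at h
  have e : (2 * Real.pi * Complex.I * ((z.arg / (2 * Real.pi) : ℝ) : ℂ))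
      = (z.arg : ℂ) * Complex.I := by
    push_cast
    field_simp
  rw [e]
  exact h.symm

/-- A unimodular sequence whose `(t+1)`-st multiplicative difference is identically `1`
is `exp(2πi P(n))` for a real polynomial `P` of degree at most `t`. -/
lemma quasi_seq_poly :
    ∀ t : ℕ, ∀ g : ℕ → ℂ, (∀ n, ‖g n‖ = 1) →
      (∀ n, (seqD)^[t + 1] g n = 1) →
      ∃ P : Polynomial ℝ, P.natDegree ≤ t ∧
        ∀ n : ℕ, g n = Complex.exp (2 * Real.pi * Complex.I * ((P.eval (n : ℝ) : ℝ) : ℂ)) := by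
  intro t
  induction t with
  | zero =>
      intro g hg h
      have hconst : ∀ n, g n = g 0 := by
        intro n
        induction n with
        | zero => rfl
        | succ m ihm =>
            have hm := seqD_mul hg m
            have h1 : seqD g m = 1 := h m
            rw [h1, one_mul] at hm
            rw [← hm, ihm]
      obtain ⟨θ, hθ⟩ := exp_of_unimodular (hg 0)
      refine ⟨Polynomial.C θ, by simp, ?_⟩
      intro n
      rw [hconst n, Polynomial.eval_C, hθ]
  | succ t ih =>
      intro g hg h
      have h' : ∀ n, (seqD)^[t + 1] (seqD g) n = 1 := by
        intro n
        have hn := h n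
        rwa [Function.iterate_succ_apply] at hn
      obtain ⟨Q, hQdeg, hQ⟩ := ih (seqD g) (seqD_abs hg) h'
      obtain ⟨S, hSdeg, hS⟩ := exists_discrete_antideriv t Q hQdeg
      have key : ∀ n : ℕ, g n = g 0 *
          Complex.exp (2 * Real.pi * Complex.I * ((S.eval (n : ℝ) - S.eval 0 : ℝ) : ℂ)) := by
        intro n
        induction n with
        | zero => simp
        | succ m ihm =>
            rw [← seqD_mul hg m, hQ m, ihm]
            rw [← mul_assoc, mul_comm (Complex.exp _) (g 0), mul_assoc, ← Complex.exp_add]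
            congr 2
            have hcast : (((m : ℕ) + 1 : ℕ) : ℝ) = (m : ℝ) + 1 := by push_cast; ring
            rw [hcast, hS (m : ℝ)]
            push_cast
            ring
      obtain ⟨θ, hθ⟩ := exp_of_unimodular (hg 0)
      refine ⟨S + Polynomial.C (θ - S.eval 0), ?_, ?_⟩
      · refine (Polynomial.natDegree_add_le _ _).trans (max_le (hSdeg) (by simp))
      · intro n
        rw [key n, hθ, ← Complex.exp_add]
        congr 1
        simp only [Polynomial.eval_add, Polynomial.eval_C]
        push_cast
        ring

lemma orbit_iter {X : Type*} (T : X → X) (x : X) :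
    ∀ (j : ℕ) (f : X → ℂ) (m : ℕ),
      (seqD)^[j] (fun m => f (T^[m] x)) m = ((derivedHom T)^[j] f) (T^[m] x) := by
  intro j
  induction j with
  | zero => intro f m; rfl
  | succ j ih =>
      intro f m
      rw [Function.iterate_succ_apply, Function.iterate_succ_apply]
      have h : seqD (fun m => f (T^[m] x)) = fun m => (derivedHom T f) (T^[m] x) := by
        funext m
        simp [seqD, derivedHom, Function.iterate_succ_apply']
      rw [h]
      exact ih (derivedHom T f) m

end FanAux

/-- Fan's polynomial-orbit theorem for quasi-eigenfunctions: an oscillating sequence of order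
`t·s` is orthogonal to `∏_i f_i (T^{q_i(n)} x)` whenever each `f_i` is a unimodular function
with `Λ^{t+1} f_i ≡ 1` (quasi-eigenfunction of order `t`) and each `q_i : ℕ → ℕ` agrees with a
real polynomial of degree at most `s`. -/
theorem oscillating_orthogonal_to_polynomial_orbits_of_quasiEigenfunctions
    {X : Type*} (T : X → X) (t s : ℕ) (ht : 1 ≤ t) (hs : 1 ≤ s)
    (c : ℕ → ℂ) (hc : OscillatingOfOrder c (t * s)) (x : X)
    (k : ℕ) (f : Fin k → X → ℂ)
    (hmod : ∀ i y, ‖f i y‖ = 1)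
    (hquasi : ∀ i y, ((derivedHom T)^[t + 1] (f i)) y = 1)
    (q : Fin k → ℕ → ℕ)
    (hq : ∀ i, ∃ Q : Polynomial ℝ, Q.natDegree ≤ s ∧ ∀ n : ℕ, (q i n : ℝ) = Q.eval (n : ℝ)) :
    Tendsto (fun N : ℕ => (N : ℂ)⁻¹ *
        ∑ n ∈ Finset.range N, c n * ∏ i : Fin k, f i (T^[q i n] x))
      atTop (nhds 0) := by
  classical
  choose Q hQdeg hQeval using hq
  -- polynomials for the orbit sequences
  have hP : ∀ i : Fin k, ∃ P : Polynomial ℝ, P.natDegree ≤ t ∧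
      ∀ m : ℕ, f i (T^[m] x) = Complex.exp (2 * Real.pi * Complex.I * ((P.eval (m : ℝ) : ℝ) : ℂ)) := by
    intro i
    refine FanAux.quasi_seq_poly t (fun m => f i (T^[m] x)) (fun m => hmod i _) ?_
    intro m
    rw [FanAux.orbit_iter T x (t + 1) (f i) m]
    exact hquasi i _
  choose P hPdeg hPval using hP
  set R : Polynomial ℝ := ∑ i : Fin k, (P i).comp (Q i) with hR
  have hRdeg : R.natDegree ≤ t * s := by
    refine Polynomial.natDegree_sum_le_of_forall_le _ _ (fun i _ => ?_)
    exact (Polynomial.natDegree_comp_le).trans (Nat.mul_le_mul (hPdeg i) (hQdeg i))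
  have hterm : ∀ n : ℕ, (∏ i : Fin k, f i (T^[q i n] x))
      = Complex.exp (2 * Real.pi * Complex.I * ((R.eval (n : ℝ) : ℝ) : ℂ)) := by
    intro n
    have h1 : ∀ i : Fin k, f i (T^[q i n] x)
        = Complex.exp (2 * Real.pi * Complex.I * (((P i).eval ((Q i).eval (n : ℝ)) : ℝ) : ℂ)) := by
      intro i
      rw [hPval i (q i n), hQeval i n]
    rw [Finset.prod_congr rfl (fun i _ => h1 i), ← Complex.exp_sum]
    congr 1
    rw [← Finset.mul_sum]
    congr 1
    rw [hR, Polynomial.eval_finset_sum]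
    push_cast
    refine Finset.sum_congr rfl (fun i _ => ?_)
    rw [Polynomial.eval_comp]
  -- now use the oscillation hypothesis
  have hlim := hc.2 R hRdeg
  set E : ℕ → ℂ := fun n => c n * Complex.exp (2 * Real.pi * Complex.I * ((R.eval (n : ℝ) : ℝ) : ℂ))
    with hE
  set u : ℕ → ℂ := fun N => ∑ n ∈ Finset.Icc 1 N, E n with hu
  have hlim' : Tendsto (fun N : ℕ => (N : ℂ)⁻¹ * u N) atTop (nhds 0) := hlim
  refine Tendsto.congr (f₁ := fun N : ℕ => (N : ℂ)⁻¹ * ∑ n ∈ Finset.range N, E n) ?_ ?_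
  · intro N
    simp only [hE, hterm]
  -- squeeze
  have h2a : Tendsto (fun N : ℕ => ‖E 0‖ / (N : ℝ)) atTop (nhds 0) :=
    tendsto_const_div_atTop_nhds_zero_nat _
  have h2b : Tendsto (fun N : ℕ => ‖((N - 1 : ℕ) : ℂ)⁻¹ * u (N - 1)‖) atTop (nhds 0) := by
    have hcomp := hlim'.comp (tendsto_sub_atTop_nat 1)
    simpa using hcomp.norm
  have hg2 : Tendsto (fun N : ℕ => ‖E 0‖ / (N : ℝ) + ‖((N - 1 : ℕ) : ℂ)⁻¹ * u (N - 1)‖)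
      atTop (nhds 0) := by
    simpa using h2a.add h2b
  refine squeeze_zero_norm' ?_ hg2
  filter_upwards [eventually_ge_atTop 1] with N hN
  obtain ⟨M, rfl⟩ : ∃ M, N = M + 1 := ⟨N - 1, by omega⟩
  have hsplit : ∑ n ∈ Finset.range (M + 1), E n = E 0 + u M := by
    rw [Finset.range_eq_Ico, Finset.sum_eq_sum_Ico_succ_bot (by omega), Finset.Ico_add_one_right_eq_Icc]
  have hMN : (M + 1) - 1 = M := by omega
  rw [hsplit, hMN, mul_add]
  refine (norm_add_le _ _).trans ?_
  have e1 : ‖((M + 1 : ℕ) : ℂ)⁻¹ * E 0‖ = ‖E 0‖ / ((M + 1 : ℕ) : ℝ) := by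
    rw [norm_mul, norm_inv, Complex.norm_natCast]
    ring
  have e2 : ‖((M + 1 : ℕ) : ℂ)⁻¹ * u M‖ ≤ ‖((M : ℕ) : ℂ)⁻¹ * u M‖ := by
    rcases Nat.eq_zero_or_pos M with hM | hM
    · subst hM
      have : u 0 = 0 := by rw [hu]; simp
      simp [this]
    · rw [norm_mul, norm_inv, Complex.norm_natCast, norm_mul, norm_inv, Complex.norm_natCast]
      have h1 : (0 : ℝ) < (M : ℝ) := by exact_mod_cast hM
      have h2 : (M : ℝ) ≤ ((M + 1 : ℕ) : ℝ) := by push_cast; linarith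
      gcongr
  rw [e1]
  exact add_le_add le_rfl e2
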